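/- Let H ∈ (0, 1/2), let (B^H_t)_{t≥0} be a fractional Brownian motion with Hurst index H having continuous sample paths, and let a ∈ ℝ, σ > 0, Y₀ > 0. For each k > 0 let Y^{(k)} be a stochastic process such that for almost every ω the path t ↦ Y^{(k)}_t(ω) is a stopped solution with parameter k driven by the path t ↦ B^H_t(ω) starting from Y₀, and suppose that for every T > 0 the set A_k(T) = {ω : Y^{(k)}_t(ω) > 0 for all t ∈ [0,T]} is measurable. Then for every T > 0, P(A_k(T)) → 1 as k → ∞. -/

import Mathlib

open MeasureTheory Filter
open scoped ProbabilityTheory ENNReal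

/-- A fractional Brownian motion with Hurst index `H ∈ (0,1)` on a probability space `Ω`:
a measurable-in-`ω`, centered Gaussian process `B` (every finite linear combination of
values at nonnegative times is Gaussian) with `B 0 = 0` a.s. and covariance
`E[B s · B t] = (s^{2H} + t^{2H} − |t − s|^{2H})/2` for `s, t ≥ 0`. -/
def IsFractionalBrownianMotion {Ω : Type*} [MeasureSpace Ω] (H : ℝ) (B : ℝ → Ω → ℝ) :
    Prop :=
  (∀ t : ℝ, 0 ≤ t → Measurable (B t)) ∧
  (∀ (n : ℕ) (t : Fin n → ℝ) (c : Fin n → ℝ), (∀ i, 0 ≤ t i) →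
    ∃ (m : ℝ) (v : NNReal),
      Measure.map (fun ω => ∑ i, c i * B (t i) ω) ℙ = ProbabilityTheory.gaussianReal m v) ∧
  (∀ᵐ ω, B 0 ω = 0) ∧
  (∀ t : ℝ, 0 ≤ t → ∫ ω, B t ω = 0) ∧
  (∀ s t : ℝ, 0 ≤ s → 0 ≤ t →
    ∫ ω, B s ω * B t ω = (s ^ (2 * H) + t ^ (2 * H) - |t - s| ^ (2 * H)) / 2)

/-- The first zero-hitting time `τ = inf{t ≥ 0 : Y t = 0}` of a path `Y`, as an extended
nonnegative real (with `τ = ∞` if `Y` never vanishes on `[0,∞)`). -/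
noncomputable def zeroHitTime (Y : ℝ → ℝ) : ℝ≥0∞ :=
  ⨅ t ∈ {t : ℝ | 0 ≤ t ∧ Y t = 0}, ENNReal.ofReal t

/-- A stopped solution of `dY = (1/2)(k/Y − aY) dt + (σ/2) dB`, `Y 0 = Y₀`, driven by the
path `B`: a continuous function on `[0,∞)` satisfying the integral equation before its
first zero-hitting time `τ` and vanishing from `τ` onwards. -/
def IsStoppedSolution (B : ℝ → ℝ) (k a σ Y₀ : ℝ) (Y : ℝ → ℝ) : Prop :=
  ContinuousOn Y (Set.Ici 0) ∧ Y 0 = Y₀ ∧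
  (∀ t : ℝ, 0 ≤ t → ENNReal.ofReal t < zeroHitTime Y →
    Y t = Y₀ + (1 / 2) * (∫ s in (0:ℝ)..t, (k / Y s - a * Y s)) + (σ / 2) * B t) ∧
  (∀ t : ℝ, 0 ≤ t → zeroHitTime Y ≤ ENNReal.ofReal t → Y t = 0)

lemma det_lemma (B : ℝ → ℝ) (k a σ Y₀ T M η : ℝ) (hσ : 0 < σ) (hY₀ : 0 < Y₀)
    (hT : 0 < T) (hM : 0 ≤ M) (hη : 0 < η)
    (hb : ∀ t ∈ Set.Icc (0:ℝ) T, |B t| ≤ M)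
    (hmod : ∀ s ∈ Set.Icc (0:ℝ) T, ∀ t ∈ Set.Icc (0:ℝ) T, |t - s| ≤ η →
      |B t - B s| ≤ Y₀ / (2 * σ))
    (hk : (Y₀ / 2) * (|a| * (Y₀ / 2) + 2 * σ * M / η) ≤ k) (hk0 : 0 < k)
    (Y : ℝ → ℝ) (hsol : IsStoppedSolution B k a σ Y₀ Y) :
    ∀ t ∈ Set.Icc (0:ℝ) T, 0 < Y t := by
  obtain ⟨hcont, h0, heq, hstop⟩ := hsol
  set δ : ℝ := Y₀ / 2 with hδdef
  have hδ : 0 < δ := by positivity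
  by_contra hcon
  push_neg at hcon
  obtain ⟨t₀, ht₀, hYt₀⟩ := hcon
  -- zero hit time is ≤ ofReal t₀
  have hhit_le : ∀ t : ℝ, 0 ≤ t → Y t = 0 → zeroHitTime Y ≤ ENNReal.ofReal t := by
    intro t ht h
    exact iInf₂_le t ⟨ht, h⟩
  have hτle : zeroHitTime Y ≤ ENNReal.ofReal t₀ := by
    rcases eq_or_lt_of_le hYt₀ with h | h
    · exact hhit_le t₀ ht₀.1 h
    · have : (0:ℝ) ∈ Set.Icc (Y t₀) (Y 0) := by
        constructor <;> simp [h.le, h0, hY₀.le]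
      have hIVT := intermediate_value_Icc' ht₀.1 (hcont.mono (Set.Icc_subset_Ici_self)) this
      obtain ⟨t₁, ht₁, hYt₁⟩ := hIVT
      exact le_trans (hhit_le t₁ ht₁.1 hYt₁) (by exact_mod_cast ENNReal.ofReal_le_ofReal ht₁.2)
  have hne : zeroHitTime Y ≠ ⊤ := ne_top_of_le_ne_top ENNReal.ofReal_ne_top hτle
  set τ : ℝ := (zeroHitTime Y).toReal with hτdef
  have hofτ : ENNReal.ofReal τ = zeroHitTime Y := ENNReal.ofReal_toReal hne
  have hτT : τ ≤ T := by
    have h1 : zeroHitTime Y ≤ ENNReal.ofReal T :=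
      le_trans hτle (ENNReal.ofReal_le_ofReal ht₀.2)
    exact ENNReal.toReal_le_of_le_ofReal hT.le h1
  have hτne0 : zeroHitTime Y ≠ 0 := by
    intro h
    have : Y 0 = 0 := hstop 0 le_rfl (by simp [h])
    rw [h0] at this; exact absurd this (ne_of_gt hY₀)
  have hτ0 : 0 < τ := ENNReal.toReal_pos hτne0 hne
  have hYτ : Y τ = 0 := hstop τ ENNReal.toReal_nonneg (le_of_eq hofτ.symm)
  have hne0 : ∀ t : ℝ, 0 ≤ t → t < τ → Y t ≠ 0 := by
    intro t ht htτ h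
    have h1 := hhit_le t ht h
    rw [← hofτ] at h1
    exact absurd ((ENNReal.ofReal_lt_ofReal_iff hτ0).mpr htτ) (not_lt_of_ge h1)
  have hpos : ∀ t : ℝ, 0 ≤ t → t < τ → 0 < Y t := by
    intro t ht htτ
    rcases lt_trichotomy (Y t) 0 with h | h | h
    · exfalso
      have : (0:ℝ) ∈ Set.Icc (Y t) (Y 0) := by
        constructor <;> simp [h.le, h0, hY₀.le]
      obtain ⟨t₁, ht₁, hYt₁⟩ :=
        intermediate_value_Icc' ht (hcont.mono (Set.Icc_subset_Ici_self)) this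
      exact hne0 t₁ ht₁.1 (lt_of_le_of_lt ht₁.2 htτ) hYt₁
    · exact absurd h (hne0 t ht htτ)
    · exact h
  -- the last time Y is at least δ
  set C : Set ℝ := Set.Icc 0 τ ∩ Y ⁻¹' Set.Ici δ with hCdef
  have hsub : Set.Icc (0:ℝ) τ ⊆ Set.Ici 0 := fun x hx => hx.1
  have hCclosed : IsClosed C :=
    (hcont.mono hsub).preimage_isClosed_of_isClosed isClosed_Icc isClosed_Ici
  have hCne : (0:ℝ) ∈ C := ⟨⟨le_rfl, hτ0.le⟩, by simp [h0, hδdef]; linarith⟩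
  have hCbdd : BddAbove C := (BddAbove.mono (fun x hx => hx.1) bddAbove_Icc)
  set s : ℝ := sSup C with hsdef
  have hsC : s ∈ C := hCclosed.csSup_mem ⟨0, hCne⟩ hCbdd
  have hs0 : 0 ≤ s := hsC.1.1
  have hsτ' : s ≤ τ := hsC.1.2
  have hYs : δ ≤ Y s := hsC.2
  have hsτ : s < τ := by
    rcases eq_or_lt_of_le hsτ' with h | h
    · exfalso; rw [h] at hYs; rw [hYτ] at hYs; linarith
    · exact h
  have hlt : ∀ u : ℝ, s < u → u ≤ τ → Y u < δ := by
    intro u hsu huτ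
    by_contra h
    push_neg at h
    exact absurd (le_csSup hCbdd (⟨⟨le_trans hs0 hsu.le, huτ⟩, h⟩ : u ∈ C)) (not_le_of_gt hsu)
  have hIoo_sub : Set.Ioo s τ ⊆ Set.Ici (0:ℝ) := fun u hu => le_trans hs0 hu.1.le
  have hcls : s ∈ closure (Set.Ioo s τ) := by
    rw [closure_Ioo (ne_of_lt hsτ)]; exact ⟨le_rfl, hsτ.le⟩
  have hclτ : τ ∈ closure (Set.Ioo s τ) := by
    rw [closure_Ioo (ne_of_lt hsτ)]; exact ⟨hsτ.le, le_rfl⟩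
  haveI hnes : (nhdsWithin s (Set.Ioo s τ)).NeBot := mem_closure_iff_nhdsWithin_neBot.mp hcls
  haveI hneτ : (nhdsWithin τ (Set.Ioo s τ)).NeBot := mem_closure_iff_nhdsWithin_neBot.mp hclτ
  have hYs' : Y s ≤ δ := by
    have htend : Tendsto Y (nhdsWithin s (Set.Ioo s τ)) (nhds (Y s)) :=
      (hcont s hs0).mono hIoo_sub
    exact le_of_tendsto htend (eventually_mem_nhdsWithin.mono fun u hu =>
      (hlt u hu.1 hu.2.le).le)
  -- find t₂ with Y t₂ < δ/2
  have htendτ : Tendsto Y (nhdsWithin τ (Set.Ioo s τ)) (nhds 0) := by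
    have h2 : Tendsto Y (nhdsWithin τ (Set.Ioo s τ)) (nhds (Y τ)) :=
      (hcont τ hτ0.le).mono hIoo_sub
    rwa [hYτ] at h2
  have hev : ∀ᶠ u in nhdsWithin τ (Set.Ioo s τ), Y u < δ / 2 ∧ u ∈ Set.Ioo s τ :=
    (htendτ.eventually_lt_const (by positivity : (0:ℝ) < δ / 2)).and
      eventually_mem_nhdsWithin
  obtain ⟨t₂, hYt₂, ht₂⟩ := hev.exists
  obtain ⟨hst₂, ht₂τ⟩ := ht₂
  -- bounds on [s, t₂]
  have hYub : ∀ u ∈ Set.Icc s t₂, Y u ≤ δ := by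
    intro u hu
    rcases eq_or_lt_of_le hu.1 with h | h
    · rw [← h]; exact hYs'
    · exact (hlt u h (le_trans hu.2 ht₂τ.le)).le
  have hYlb : ∀ u ∈ Set.Icc s t₂, 0 < Y u := fun u hu =>
    hpos u (le_trans hs0 hu.1) (lt_of_le_of_lt hu.2 ht₂τ)
  -- integral equation
  set f : ℝ → ℝ := fun u => k / Y u - a * Y u with hfdef
  have hfcont : ContinuousOn f (Set.Icc 0 t₂) := by
    have hYcont : ContinuousOn Y (Set.Icc 0 t₂) :=
      hcont.mono (fun x hx => hx.1)
    have hYne : ∀ u ∈ Set.Icc (0:ℝ) t₂, Y u ≠ 0 := fun u hu =>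
      (hpos u hu.1 (lt_of_le_of_lt hu.2 ht₂τ)).ne'
    exact (continuousOn_const.div hYcont hYne).sub (continuousOn_const.mul hYcont)
  have hint1 : IntervalIntegrable f MeasureTheory.volume 0 s := by
    apply ContinuousOn.intervalIntegrable
    rw [Set.uIcc_of_le hs0]
    exact hfcont.mono (Set.Icc_subset_Icc le_rfl hst₂.le)
  have hint2 : IntervalIntegrable f MeasureTheory.volume s t₂ := by
    apply ContinuousOn.intervalIntegrable
    rw [Set.uIcc_of_le hst₂.le]
    exact hfcont.mono (Set.Icc_subset_Icc hs0 le_rfl)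
  have hofs : ENNReal.ofReal s < zeroHitTime Y := by
    rw [← hofτ]; exact (ENNReal.ofReal_lt_ofReal_iff hτ0).mpr hsτ
  have hoft₂ : ENNReal.ofReal t₂ < zeroHitTime Y := by
    rw [← hofτ]; exact (ENNReal.ofReal_lt_ofReal_iff hτ0).mpr ht₂τ
  have ht₂0 : 0 ≤ t₂ := le_trans hs0 hst₂.le
  have heqs := heq s hs0 hofs
  have heqt₂ := heq t₂ ht₂0 hoft₂
  have hadd : (∫ u in (0:ℝ)..s, f u) + ∫ u in s..t₂, f u = ∫ u in (0:ℝ)..t₂, f u :=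
    intervalIntegral.integral_add_adjacent_intervals hint1 hint2
  have hYt₂eq : Y t₂ = Y s + (1/2) * (∫ u in s..t₂, f u) + (σ/2) * (B t₂ - B s) := by
    rw [heqs, heqt₂, ← hadd]; ring
  -- lower bound on the integral
  set c : ℝ := k / δ - |a| * δ with hcdef
  have hc2 : 2 * σ * M / η ≤ c := by
    have h1 : |a| * δ + 2 * σ * M / η ≤ k / δ := by
      rw [le_div_iff₀ hδ] at *
      nlinarith [hk]
    rw [hcdef]; linarith
  have hc0 : 0 ≤ c := le_trans (by positivity) hc2
  have hflb : ∀ u ∈ Set.Icc s t₂, c ≤ f u := by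
    intro u hu
    have h1 : 0 < Y u := hYlb u hu
    have h2 : Y u ≤ δ := hYub u hu
    have h3 : k / δ ≤ k / Y u := by
      apply div_le_div_of_nonneg_left hk0.le h1 h2
    have h4 : a * Y u ≤ |a| * δ := by
      calc a * Y u ≤ |a * Y u| := le_abs_self _
        _ = |a| * |Y u| := abs_mul a (Y u)
        _ = |a| * Y u := by rw [abs_of_pos h1]
        _ ≤ |a| * δ := by
            apply mul_le_mul_of_nonneg_left h2 (abs_nonneg a)
    rw [hcdef, hfdef]; dsimp only; linarith
  have hIlb : c * (t₂ - s) ≤ ∫ u in s..t₂, f u := by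
    have := intervalIntegral.integral_mono_on hst₂.le
      (intervalIntegrable_const (c := c)) hint2 hflb
    rwa [intervalIntegral.integral_const, smul_eq_mul, mul_comm] at this
  -- membership in [0,T]
  have hsT : s ∈ Set.Icc (0:ℝ) T := ⟨hs0, le_trans hsτ' hτT⟩
  have ht₂T : t₂ ∈ Set.Icc (0:ℝ) T := ⟨ht₂0, le_trans ht₂τ.le hτT⟩
  rcases le_or_gt (t₂ - s) η with hcase | hcase
  · -- short interval: use modulus
    have hmod' : |B t₂ - B s| ≤ Y₀ / (2 * σ) := by
      apply hmod s hsT t₂ ht₂T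
      rw [abs_of_nonneg (by linarith)]
      exact hcase
    have hBlb : -(Y₀ / (2 * σ)) ≤ B t₂ - B s := (abs_le.mp hmod').1
    have hprod : (σ/2) * (-(Y₀ / (2 * σ))) ≤ (σ/2) * (B t₂ - B s) :=
      mul_le_mul_of_nonneg_left hBlb (by positivity)
    have hval : (σ/2) * (-(Y₀ / (2 * σ))) = -(Y₀/4) := by
      field_simp; ring
    have h5 : -(Y₀/4) ≤ (σ/2) * (B t₂ - B s) := hval ▸ hprod
    have hIpos : (0:ℝ) ≤ ∫ u in s..t₂, f u :=
      le_trans (mul_nonneg hc0 (by linarith)) hIlb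
    rw [hδdef] at hYt₂ hYs
    linarith [hYt₂eq, hYs, hIpos, h5, hYt₂]
  · -- long interval: use sup bound
    have hB1 := hb s hsT
    have hB2 := hb t₂ ht₂T
    have hBlb : -(2*M) ≤ B t₂ - B s := by
      have := (abs_le.mp hB1).1
      have := (abs_le.mp hB2).1
      have := (abs_le.mp hB1).2
      have := (abs_le.mp hB2).2
      linarith
    have hprod : (σ/2) * (-(2*M)) ≤ (σ/2) * (B t₂ - B s) :=
      mul_le_mul_of_nonneg_left hBlb (by positivity)
    have hcη : 2 * σ * M ≤ c * η := by
      have h1 := mul_le_mul_of_nonneg_right hc2 hη.le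
      rwa [div_mul_cancel₀ _ (ne_of_gt hη)] at h1
    have hcts : c * η ≤ c * (t₂ - s) :=
      mul_le_mul_of_nonneg_left hcase.le hc0
    linarith [hYt₂eq, hYs, hIlb, hprod, hcη, hcts, hYt₂, hδ]

lemma ext_one (g : ℝ → ℝ) (hg : Continuous g) (T c : ℝ) (hT : 0 < T)
    (h : ∀ q : ℚ, |g (max 0 (min (q:ℝ) T))| ≤ c) :
    ∀ t ∈ Set.Icc (0:ℝ) T, |g t| ≤ c := by
  intro t ht
  obtain ⟨x, hx, hlim⟩ := mem_closure_iff_seq_limit.mp (Rat.denseRange_cast (𝕜 := ℝ) t)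
  have hE : Continuous fun y : ℝ => |g (max 0 (min y T))| :=
    (hg.comp (continuous_const.max (continuous_id.min continuous_const))).abs
  have htend : Tendsto (fun n => |g (max 0 (min (x n) T))|) atTop (nhds |g t|) := by
    have := (hE.tendsto t).comp hlim
    simpa [Function.comp_def, min_eq_left ht.2, max_eq_right ht.1] using this
  refine le_of_tendsto htend (Eventually.of_forall fun n => ?_)
  obtain ⟨q, hq⟩ := hx n
  rw [← hq]
  exact h q

lemma ext_two (g : ℝ → ℝ) (hg : Continuous g) (T c η : ℝ) (hT : 0 < T) (hη : 0 < η)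
    (h : ∀ q q' : ℚ, |max 0 (min ((q':ℝ)) T) - max 0 (min ((q:ℝ)) T)| ≤ 2 * η →
      |g (max 0 (min ((q':ℝ)) T)) - g (max 0 (min ((q:ℝ)) T))| ≤ c) :
    ∀ s ∈ Set.Icc (0:ℝ) T, ∀ t ∈ Set.Icc (0:ℝ) T, |t - s| ≤ η → |g t - g s| ≤ c := by
  intro s hs t ht hst
  obtain ⟨x, hx, hlimx⟩ := mem_closure_iff_seq_limit.mp (Rat.denseRange_cast (𝕜 := ℝ) s)
  obtain ⟨y, hy, hlimy⟩ := mem_closure_iff_seq_limit.mp (Rat.denseRange_cast (𝕜 := ℝ) t)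
  set e : ℝ → ℝ := fun z => max 0 (min z T) with hedef
  have he : Continuous e := continuous_const.max (continuous_id.min continuous_const)
  have hes : e s = s := by simp [hedef, min_eq_left hs.2, max_eq_right hs.1]
  have het : e t = t := by simp [hedef, min_eq_left ht.2, max_eq_right ht.1]
  have hex : Tendsto (fun n => e (x n)) atTop (nhds s) := by
    have := (he.tendsto s).comp hlimx; rwa [hes] at this
  have hey : Tendsto (fun n => e (y n)) atTop (nhds t) := by
    have := (he.tendsto t).comp hlimy; rwa [het] at this
  have hdist : Tendsto (fun n => |e (y n) - e (x n)|) atTop (nhds |t - s|) :=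
    ((hey.sub hex).abs)
  have hev : ∀ᶠ n in atTop, |e (y n) - e (x n)| ≤ 2 * η := by
    have : |t - s| < 2 * η := lt_of_le_of_lt hst (by linarith)
    exact (hdist.eventually_lt_const this).mono fun n hn => hn.le
  have hgtend : Tendsto (fun n => |g (e (y n)) - g (e (x n))|) atTop (nhds |g t - g s|) := by
    have h1 := (hg.tendsto s).comp hex
    have h2 := (hg.tendsto t).comp hey
    exact ((h2.sub h1).abs)
  refine le_of_tendsto hgtend (hev.mono fun n hn => ?_)
  obtain ⟨q, hq⟩ := hx n
  obtain ⟨q', hq'⟩ := hy n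
  rw [← hq, ← hq'] at hn ⊢
  exact h q q' hn

/-- Theorem 4.2: for `H ∈ (0, 1/2)` and stopped solutions `Y^{(k)}` of the
fractional CIR square-root equation driven by a fractional Brownian motion with continuous
paths, the probability `P(Y^{(k)}_t > 0 for all t ∈ [0,T])` tends to `1` as `k → ∞`, for
every `T > 0`. -/
theorem fCIR_prob_no_zero_hitting_tendsto_one (Ω : Type*) [MeasureSpace Ω]
    [IsProbabilityMeasure (ℙ : Measure Ω)]
    (H : ℝ) (hH0 : 0 < H) (hH1 : H < 1 / 2) (B : ℝ → Ω → ℝ)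
    (hB : IsFractionalBrownianMotion H B)
    (hBcont : ∀ ω, Continuous fun t => B t ω)
    (a σ Y₀ : ℝ) (hσ : 0 < σ) (hY₀ : 0 < Y₀)
    (Y : ℝ → ℝ → Ω → ℝ)
    (hY : ∀ k : ℝ, 0 < k →
      ∀ᵐ ω, IsStoppedSolution (fun t => B t ω) k a σ Y₀ (fun t => Y k t ω))
    (hmeas : ∀ T : ℝ, 0 < T → ∀ k : ℝ, 0 < k →
      MeasurableSet {ω | ∀ t ∈ Set.Icc (0:ℝ) T, 0 < Y k t ω}) :
    ∀ T : ℝ, 0 < T →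
      Tendsto (fun k : ℝ => ℙ {ω | ∀ t ∈ Set.Icc (0:ℝ) T, 0 < Y k t ω}) atTop (nhds 1) := by
  intro T hT
  rw [ENNReal.tendsto_nhds (by simp : (1:ℝ≥0∞) ≠ ⊤)]
  intro ε hε
  set e : ℝ → ℝ := fun z => max 0 (min z T) with hedef
  have he0 : ∀ z : ℝ, 0 ≤ e z := fun z => le_max_left _ _
  have heT : ∀ z : ℝ, e z ≤ T := fun z => max_le hT.le (min_le_right _ _)
  set G : ℕ → Set Ω := fun n =>
    {ω | (∀ q : ℚ, |B (e q) ω| ≤ (n:ℝ) + 1) ∧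
      ∀ q q' : ℚ, |e q' - e q| ≤ 2 * (1 / ((n:ℝ) + 1)) →
        |B (e q') ω - B (e q) ω| ≤ Y₀ / (2 * σ)} with hGdef
  have hGmeas : ∀ n, MeasurableSet (G n) := by
    intro n
    have hGeq : G n = (⋂ q : ℚ, {ω | |B (e q) ω| ≤ (n:ℝ) + 1}) ∩
        ⋂ q : ℚ, ⋂ q' : ℚ, {ω | |e q' - e q| ≤ 2 * (1 / ((n:ℝ) + 1)) →
          |B (e q') ω - B (e q) ω| ≤ Y₀ / (2 * σ)} := by
      ext ω
      simp only [hGdef, Set.mem_setOf_eq, Set.mem_inter_iff, Set.mem_iInter]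
    rw [hGeq]
    refine MeasurableSet.inter (MeasurableSet.iInter fun q => ?_)
      (MeasurableSet.iInter fun q => MeasurableSet.iInter fun q' => ?_)
    · exact measurableSet_le ((hB.1 (e q) (he0 q)).abs) measurable_const
    · by_cases hc : |e q' - e q| ≤ 2 * (1 / ((n:ℝ) + 1))
      · simp only [hc, forall_true_left]
        exact measurableSet_le (((hB.1 (e q') (he0 q')).sub (hB.1 (e q) (he0 q))).abs)
          measurable_const
      · simp only [hc, false_implies, Set.setOf_true]
        exact MeasurableSet.univ
  have hGmono : Monotone G := by
    intro n m hnm ω hω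
    have hcast : (n:ℝ) ≤ (m:ℝ) := Nat.cast_le.mpr hnm
    refine ⟨fun q => le_trans (hω.1 q) (by linarith), fun q q' hqq => ?_⟩
    refine hω.2 q q' (le_trans hqq ?_)
    have h2 : 1 / ((m:ℝ) + 1) ≤ 1 / ((n:ℝ) + 1) :=
      one_div_le_one_div_of_le (by positivity) (by linarith)
    linarith
  have hGunion : (⋃ n, G n) = Set.univ := by
    rw [Set.eq_univ_iff_forall]
    intro ω
    obtain ⟨M₀, hM₀⟩ := isCompact_Icc.exists_bound_of_continuousOn
      (s := Set.Icc (0:ℝ) T) ((hBcont ω).continuousOn)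
    obtain ⟨η₀, hη₀, hmod⟩ := Metric.uniformContinuousOn_iff.mp
      (isCompact_Icc.uniformContinuousOn_of_continuous (s := Set.Icc (0:ℝ) T)
        ((hBcont ω).continuousOn)) (Y₀ / (2 * σ)) (by positivity)
    obtain ⟨n₁, hn₁⟩ := exists_nat_ge M₀
    obtain ⟨n₂, hn₂⟩ := exists_nat_one_div_lt (ε := η₀ / 2) (by positivity)
    refine Set.mem_iUnion.mpr ⟨max n₁ n₂, ?_, ?_⟩
    · intro q
      have h1 : |B (e q) ω| ≤ M₀ := by
        simpa using hM₀ (e q) ⟨he0 q, heT q⟩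
      have : (n₁:ℝ) ≤ (max n₁ n₂ : ℕ) := by exact_mod_cast Nat.cast_le.mpr (le_max_left _ _)
      linarith
    · intro q q' hqq
      have hlt : 2 * (1 / ((max n₁ n₂ : ℕ) + 1 : ℝ)) < η₀ := by
        have hcast : (n₂:ℝ) ≤ ((max n₁ n₂ : ℕ) : ℝ) := Nat.cast_le.mpr (le_max_right _ _)
        have h1 : 1 / ((max n₁ n₂ : ℕ) + 1 : ℝ) ≤ 1 / ((n₂:ℝ) + 1) :=
          one_div_le_one_div_of_le (by positivity) (by linarith)
        linarith
      have hd : dist (e q') (e q) < η₀ := by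
        rw [Real.dist_eq]
        exact lt_of_le_of_lt hqq hlt
      have := hmod (e q') ⟨he0 q', heT q'⟩ (e q) ⟨he0 q, heT q⟩ hd
      rw [Real.dist_eq] at this
      exact this.le
  have hlim : Tendsto (fun n => ℙ (G n)) atTop (nhds 1) := by
    have := tendsto_measure_iUnion_atTop (μ := (ℙ : Measure Ω)) hGmono
    rwa [hGunion, measure_univ] at this
  obtain ⟨n, hn⟩ := ((ENNReal.tendsto_nhds (by simp : (1:ℝ≥0∞) ≠ ⊤)).mp hlim ε hε).exists
  set M : ℝ := (n:ℝ) + 1 with hMdef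
  set η : ℝ := 1 / ((n:ℝ) + 1) with hηdef
  have hMpos : (0:ℝ) < M := by positivity
  have hηpos : (0:ℝ) < η := by positivity
  set K : ℝ := max 1 ((Y₀ / 2) * (|a| * (Y₀ / 2) + 2 * σ * M / η)) with hKdef
  filter_upwards [eventually_ge_atTop K] with k hkK
  have hk0 : (0:ℝ) < k := lt_of_lt_of_le (lt_of_lt_of_le one_pos (le_max_left _ _)) hkK
  have hkbig : (Y₀ / 2) * (|a| * (Y₀ / 2) + 2 * σ * M / η) ≤ k :=
    le_trans (le_max_right _ _) hkK
  set A : Set Ω := {ω | ∀ t ∈ Set.Icc (0:ℝ) T, 0 < Y k t ω} with hAdef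
  have hA1 : ℙ A ≤ 1 := prob_le_one
  constructor
  · -- 1 - ε ≤ ℙ A
    set bad : Set Ω := {ω | ¬ IsStoppedSolution (fun t => B t ω) k a σ Y₀ (fun t => Y k t ω)}
      with hbaddef
    have hbad0 : ℙ bad = 0 := by
      have := hY k hk0
      rw [ae_iff] at this
      exact this
    have hsub : G n ⊆ A ∪ bad := by
      intro ω hω
      by_cases hsol : IsStoppedSolution (fun t => B t ω) k a σ Y₀ (fun t => Y k t ω)
      · left
        refine det_lemma (fun t => B t ω) k a σ Y₀ T M η hσ hY₀ hT hMpos.le hηpos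
          ?_ ?_ hkbig hk0 (fun t => Y k t ω) hsol
        · exact ext_one (fun t => B t ω) (hBcont ω) T M hT hω.1
        · intro s hs t ht hst
          exact ext_two (fun t => B t ω) (hBcont ω) T (Y₀ / (2 * σ)) η hT hηpos
            hω.2 s hs t ht hst
      · right; exact hsol
    calc 1 - ε ≤ ℙ (G n) := hn.1
      _ ≤ ℙ (A ∪ bad) := measure_mono hsub
      _ ≤ ℙ A + ℙ bad := measure_union_le _ _
      _ = ℙ A := by rw [hbad0, add_zero]
  · exact le_trans hA1 (le_add_right le_rfl)
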